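/- arXiv:2307.14670 — 4 statements merged into one kernel-verified Lean document; each statement's English description precedes it below -/
import Mathlib

section
/- Let A₃ < 0, A₂, A₁, A₀ real, and consider the depressed cubic ν³ + pν + q = 0 with p = -(3A₁A₃+A₂²)/(3A₃²). If the discriminant Δ = -4p³ - 27q² < 0 and p < 0, then the real root ν₁ = (-q/2 + √(q²/4+p³/27))^{1/3} + (-q/2 - √(q²/4+p³/27))^{1/3} satisfies ν₁² ≥ -p/3. -/
/-- For A₃ < 0 and p = -(3A₁A₃+A₂²)/(3A₃²), if the discriminant
Δ = -4p³ - 27q² < 0 and p < 0, then the real Cardano root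
ν₁ = (-q/2+√(q²/4+p³/27))^{1/3} + (-q/2-√(q²/4+p³/27))^{1/3}
satisfies ν₁² ≥ -p/3. -/
theorem cardano_real_root_bound (A₀ A₁ A₂ A₃ q : ℝ) (hA₃ : A₃ < 0) :
    let p := -(3*A₁*A₃ + A₂^2)/(3*A₃^2)
    ∀ u v : ℝ, -4*p^3 - 27*q^2 < 0 → p < 0 →
      u^3 = -q/2 + Real.sqrt (q^2/4 + p^3/27) →
      v^3 = -q/2 - Real.sqrt (q^2/4 + p^3/27) →
      (u+v)^2 ≥ -p/3 := by
  intro p u v hΔ hp hu hv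
  have hD : (0:ℝ) ≤ q^2/4 + p^3/27 := by nlinarith
  have hs : Real.sqrt (q^2/4 + p^3/27) ^ 2 = q^2/4 + p^3/27 := Real.sq_sqrt hD
  have hcube : (u*v)^3 = (-p/3)^3 := by
    have : (u*v)^3 = u^3 * v^3 := by ring
    rw [this, hu, hv]; nlinarith [hs]
  have huv : u*v = -p/3 :=
    (Odd.strictMono_pow (R := ℝ) (⟨1, by norm_num⟩ : Odd 3)).injective hcube
  nlinarith [sq_nonneg (u - v), huv, hp]
end

section
/- Suppose k₀, k₁, k₂ are the three roots of A₃k³ + Bk² - A₁k - C = 0 with A₃ ≠ 0 (so k₀+k₁+k₂ = -B/A₃ and k₀k₁+k₁k₂+k₂k₀ = -A₁/A₃). If complex numbers b, c satisfy -A₃c - i(A₃kⱼ + B)b + (A₃kⱼ² + Bkⱼ - A₁)a = 0 for j = 1 and j = 2 with k₁ ≠ k₂, then b = ik₀·a and c = -k₀²·a. -/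
/-- D-N map linear algebra for the third-order model: if k₀,k₁,k₂ are the
roots of A₃k³+Bk²-A₁k-C (A₃ ≠ 0) and b,c satisfy the removability conditions
at k₁ ≠ k₂, then b = ik₀a and c = -k₀²a. -/
theorem dn_map_third_order (A₃ B A₁ C : ℂ) (k₀ k₁ k₂ a b c : ℂ)
    (hA₃ : A₃ ≠ 0)
    (hroots : ∀ k : ℂ, A₃*k^3 + B*k^2 - A₁*k - C = A₃*(k-k₀)*(k-k₁)*(k-k₂))
    (hne : k₁ ≠ k₂)
    (h1 : -A₃*c - Complex.I*(A₃*k₁ + B)*b + (A₃*k₁^2 + B*k₁ - A₁)*a = 0)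
    (h2 : -A₃*c - Complex.I*(A₃*k₂ + B)*b + (A₃*k₂^2 + B*k₂ - A₁)*a = 0) :
    b = Complex.I*k₀*a ∧ c = -k₀^2*a := by
  have e1 := hroots 1
  have e0 := hroots 0
  have em := hroots (-1)
  have hB : B = -A₃*(k₀+k₁+k₂) := by linear_combination (e1 + em)/2 - e0
  have hA1 : A₁ = -A₃*(k₀*k₁+k₁*k₂+k₂*k₀) := by linear_combination (em - e1)/2
  subst hB hA1
  have hk : k₁ - k₂ ≠ 0 := sub_ne_zero.mpr hne
  have key : A₃*(k₁-k₂)*(b - Complex.I*k₀*a) = 0 := by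
    linear_combination Complex.I*h1 - Complex.I*h2 + A₃*(k₁-k₂)*b * Complex.I_sq
  have hb : b = Complex.I*k₀*a := by
    have := mul_eq_zero.mp key
    rcases this with h | h
    · exact absurd h (mul_ne_zero hA₃ hk)
    · exact sub_eq_zero.mp h
  subst hb
  refine ⟨rfl, ?_⟩
  have keyc : A₃*(c - (-k₀^2*a)) = 0 := by
    linear_combination -h1 + (A₃*(k₀+k₂)*k₀*a)*Complex.I_sq
  rcases mul_eq_zero.mp keyc with h | h
  · exact absurd h hA₃
  · exact sub_eq_zero.mp h
end

section
/- Let A₋₂ > 0, A₁ > 0, A₀, A₂ real. Define β± = (-(A₂+A₀A₋₂) ± √((A₂+A₀A₋₂)² + A₁²A₋₂))/(A₁A₋₂) and ω_cr± = A₁β±/2 + A₀. If ω_cr⁻ ≤ s ≤ ω_cr⁺ and Δ = A₁² + 4(A₀-s)(A₂+sA₋₂) ≥ 0 with A₂+sA₋₂ ≠ 0, then the root k₋ = (A₁ - √Δ)/(2(A₂+sA₋₂)) satisfies β₋ ≤ k₋ ≤ β₊. -/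
lemma nonlocal_aux (Am2 A₁ B C sd R k : ℝ)
    (hAm2 : 0 < Am2) (hA₁ : 0 < A₁) (hC : C ≠ 0)
    (hsdnn : 0 ≤ sd) (hRnn : 0 ≤ R)
    (hR2 : R^2 = B^2 + A₁^2*Am2)
    (hBC : 4*C*(B - C) = Am2*(sd^2 - A₁^2))
    (hk : k = (A₁ - sd)/(2*C)) :
    (-B - R)/(A₁*Am2) ≤ k ∧ k ≤ (-B + R)/(A₁*Am2) := by
  have hD : (0:ℝ) < A₁*Am2 := by positivity
  have hC2 : (0:ℝ) < C^2 := by positivity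
  have h2Ck : 2*C*k = A₁ - sd := by rw [hk]; field_simp
  have hq : A₁*Am2*k^2 + 2*B*k - A₁ ≤ 0 := by
    have h4 : 4*C^2*(A₁*Am2*k^2 + 2*B*k - A₁) = -(4*C^2 + Am2*(A₁-sd)^2)*sd := by
      linear_combination (A₁*Am2*(2*C*k + A₁ - sd) + 4*B*C) * h2Ck + (A₁-sd)*hBC
    nlinarith [mul_nonneg hsdnn (sq_nonneg C),
      mul_nonneg hsdnn (mul_nonneg hAm2.le (sq_nonneg (A₁-sd))), hC2]
  have hsq : (A₁*Am2*k + B)^2 ≤ R^2 := by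
    have hid2 : (A₁*Am2*k + B)^2 = R^2 + (A₁*Am2)*(A₁*Am2*k^2 + 2*B*k - A₁) := by
      linear_combination -hR2
    nlinarith [mul_nonpos_of_nonneg_of_nonpos hD.le hq]
  constructor
  · rw [div_le_iff₀ hD]
    nlinarith [sq_nonneg (A₁*Am2*k + B + R)]
  · rw [le_div_iff₀ hD]
    nlinarith [sq_nonneg (A₁*Am2*k + B - R)]

/-- For the nonlocal second-order model with A₋₂ > 0, A₁ > 0: if
ω_cr⁻ ≤ s ≤ ω_cr⁺ and Δ ≥ 0 with A₂+sA₋₂ ≠ 0, then the root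
k₋ = (A₁-√Δ)/(2(A₂+sA₋₂)) satisfies β₋ ≤ k₋ ≤ β₊. -/
theorem nonlocal_root_in_interval (Am2 A₀ A₁ A₂ s : ℝ)
    (hAm2 : 0 < Am2) (hA₁ : 0 < A₁) :
    let βp := (-(A₂ + A₀*Am2) + Real.sqrt ((A₂ + A₀*Am2)^2 + A₁^2*Am2))/(A₁*Am2)
    let βm := (-(A₂ + A₀*Am2) - Real.sqrt ((A₂ + A₀*Am2)^2 + A₁^2*Am2))/(A₁*Am2)
    let ωp := A₁*βp/2 + A₀
    let ωm := A₁*βm/2 + A₀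
    let Δ := A₁^2 + 4*(A₀ - s)*(A₂ + s*Am2)
    ωm ≤ s → s ≤ ωp → 0 ≤ Δ → A₂ + s*Am2 ≠ 0 →
      βm ≤ (A₁ - Real.sqrt Δ)/(2*(A₂ + s*Am2)) ∧
      (A₁ - Real.sqrt Δ)/(2*(A₂ + s*Am2)) ≤ βp := by
  intro βp βm ωp ωm Δ _ _ hΔ hC
  have hsd2 : (Real.sqrt Δ)^2 = Δ := Real.sq_sqrt hΔ
  have hR2 : (Real.sqrt ((A₂ + A₀*Am2)^2 + A₁^2*Am2))^2 = (A₂ + A₀*Am2)^2 + A₁^2*Am2 :=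
    Real.sq_sqrt (by positivity)
  exact nonlocal_aux Am2 A₁ (A₂ + A₀*Am2) (A₂ + s*Am2) (Real.sqrt Δ)
    (Real.sqrt ((A₂ + A₀*Am2)^2 + A₁^2*Am2)) _ hAm2 hA₁ hC
    (Real.sqrt_nonneg _) (Real.sqrt_nonneg _) hR2
    (by rw [hsd2]; ring) rfl
end

section
/- For 0 < ω₀ < 1/2 and 0 < ξ < c_g(ω₀) = (1-4ω₀² + √(1-4ω₀²))/2, the root k₂ = (1-√(1-4ω₀²))/(2ω₀) of k/(1+k²) = ω₀ satisfies k₂ < ρ₁(ξ), where ρ₁(ξ) = √(-1 + (√(1+8ξ)-1)/(2ξ)) is the positive real BBM saddle point; equivalently, the pole k₂ lies inside the saddle value exactly when ξ < ω'(k₂). -/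
lemma bbm_key (k t : ℝ) (hk0 : 0 ≤ k) (ht : 0 < t) (ht1 : t < 1) :
    k < Real.sqrt (-1 + (Real.sqrt (1+8*t) - 1)/(2*t)) ↔
      t < (1-k^2)/(1+k^2)^2 := by
  have h8 : (0:ℝ) ≤ 1 + 8*t := by linarith
  set r := Real.sqrt (1+8*t) with hr
  have hr2 : r^2 = 1 + 8*t := Real.sq_sqrt h8
  have hr0 : 0 ≤ r := Real.sqrt_nonneg _
  have hr1 : 1 < r := by nlinarith
  set a := -1 + (r-1)/(2*t) with ha
  have ht' : t ≠ 0 := ne_of_gt ht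
  have hapos : 0 < a := by
    have h1 : 1 + 2*t < r := by nlinarith
    rw [ha]
    have : (1:ℝ) < (r-1)/(2*t) := by
      rw [lt_div_iff₀ (by linarith)]; linarith
    linarith
  have heq : t * (1+a)^2 = 1 - a := by
    rw [ha]; field_simp; nlinarith [hr2]
  rw [Real.lt_sqrt hk0, lt_div_iff₀ (by positivity : (0:ℝ) < (1+k^2)^2)]
  constructor
  · intro h
    nlinarith [mul_pos (sub_pos.2 h) (by nlinarith : (0:ℝ) < 1 + t*(2+a+k^2))]
  · intro h
    by_contra h'
    push_neg at h'
    nlinarith [mul_nonneg (sub_nonneg.2 h') (by nlinarith : (0:ℝ) ≤ 1 + t*(2+a+k^2))]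

/-- For 0 < ω₀ < 1/2 and 0 < ξ < c_g(ω₀) = (1-4ω₀²+√(1-4ω₀²))/2, the root
k₂ = (1-√(1-4ω₀²))/(2ω₀) satisfies k₂ < ρ₁(ξ); equivalently, for 0 < ξ < 1,
k₂ < ρ₁(ξ) iff ξ < ω'(k₂). -/
theorem bbm_pole_saddle_comparison (ω₀ ξ : ℝ) (h1 : 0 < ω₀) (h2 : ω₀ < 1/2)
    (h3 : 0 < ξ)
    (h4 : ξ < (1 - 4*ω₀^2 + Real.sqrt (1 - 4*ω₀^2))/2) :
    let k₂ := (1 - Real.sqrt (1 - 4*ω₀^2))/(2*ω₀)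
    let ρ₁ := fun t : ℝ => Real.sqrt (-1 + (Real.sqrt (1+8*t) - 1)/(2*t))
    k₂ < ρ₁ ξ ∧
    (∀ t : ℝ, 0 < t → t < 1 →
      (k₂ < ρ₁ t ↔ t < (1-k₂^2)/(1+k₂^2)^2)) := by
  intro k₂ ρ₁
  have hu : (0:ℝ) < 1 - 4*ω₀^2 := by nlinarith
  set s := Real.sqrt (1 - 4*ω₀^2) with hs
  have hs2 : s^2 = 1 - 4*ω₀^2 := Real.sq_sqrt (le_of_lt hu)
  have hs0 : 0 < s := Real.sqrt_pos.2 hu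
  have hs1 : s < 1 := by nlinarith
  have hk0 : 0 ≤ k₂ := by
    apply div_nonneg (by linarith) (by linarith)
  have hk1 : k₂ < 1 := by
    show (1 - s)/(2*ω₀) < 1
    rw [div_lt_one (by linarith)]
    nlinarith
  have hω' : (1-k₂^2)/(1+k₂^2)^2 = (1 - 4*ω₀^2 + s)/2 := by
    show (1-((1-s)/(2*ω₀))^2)/(1+((1-s)/(2*ω₀))^2)^2 = (1 - 4*ω₀^2 + s)/2
    have h1s : 1 + ((1-s)/(2*ω₀))^2 = 2*(1-s)/(4*ω₀^2) := by
      field_simp; nlinarith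
    have h2s : 1 - ((1-s)/(2*ω₀))^2 = 2*s*(1-s)/(4*ω₀^2) := by
      field_simp; nlinarith
    rw [h1s, h2s]
    have h1s' : (1:ℝ) - s ≠ 0 := by nlinarith
    field_simp
    linear_combination (16*s*(1-s)*ω₀^2 + 16*ω₀^2*(s-1)^2 + 1 - 16*ω₀^2 + 16*s*ω₀^2) * hs2
  constructor
  · rw [show ρ₁ ξ = Real.sqrt (-1 + (Real.sqrt (1+8*ξ) - 1)/(2*ξ)) from rfl]
    rw [bbm_key k₂ ξ hk0 h3 (by nlinarith), hω']
    linarith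
  · intro t ht ht1
    rw [show ρ₁ t = Real.sqrt (-1 + (Real.sqrt (1+8*t) - 1)/(2*t)) from rfl]
    exact bbm_key k₂ t hk0 ht ht1
end
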